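/- Fix ε ∈ (0, √2). Partition [z₁,z₂] by points x_j = z₁ + εj. If a continuous function B satisfies B(x_j) > −x_j² + 1 at every mesh point and the bridged part B^{[x_j,x_{j+1}]}(x) = B(x) − linear interpolation of B between x_j and x_{j+1} satisfies inf B^{[x_j,x_{j+1}]} ≥ −1/2 on every mesh interval, then B(x) > −x² for all x ∈ [z₁, z₂]. The key inequality is: for all y ∈ [0,1], ε²·y(1−y) < 1/2 whenever ε < √2. -/

import Mathlib

open Real

lemma interval_step_aux (ε a x Ba Bb Bx : ℝ) (hε0 : 0 < ε)
    (hBa : -a ^ 2 + 1 ≤ Ba) (hBb : -(a + ε) ^ 2 + 1 ≤ Bb)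
    (hB : -(1 / 2) ≤ Bx - (((a + ε) - x) / ε * Ba + (x - a) / ε * Bb))
    (hax : a ≤ x) (hxb : x ≤ a + ε)
    (hkey : ε ^ 2 * (((x - a) / ε) * (1 - (x - a) / ε)) < 1 / 2) :
    -x ^ 2 < Bx := by
  set c₂ : ℝ := (x - a) / ε with hc₂
  have hc₂0 : 0 ≤ c₂ := div_nonneg (by linarith) hε0.le
  have hc₂1 : c₂ ≤ 1 := by rw [hc₂, div_le_one hε0]; linarith
  have hxf : x = a + ε * c₂ := by rw [hc₂]; field_simp <;> ring
  have hc1 : (a + ε - x) / ε = 1 - c₂ := by field_simp [hc₂]; rw [hxf]; ring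
  rw [hc1] at hB
  clear_value c₂
  have h1 : (1 - c₂) * (-a ^ 2 + 1) ≤ (1 - c₂) * Ba :=
    mul_le_mul_of_nonneg_left hBa (by linarith)
  have h2 : c₂ * (-(a + ε) ^ 2 + 1) ≤ c₂ * Bb :=
    mul_le_mul_of_nonneg_left hBb hc₂0
  have key2 : 1 / 2 - ε ^ 2 * (c₂ * (1 - c₂)) =
      ((1 - c₂) * (-a ^ 2 + 1) + c₂ * (-(a + ε) ^ 2 + 1)) - 1 / 2 + x ^ 2 := by
    rw [hxf]; ring
  linarith [hB, h1, h2, key2, hkey]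

/-- Fix `ε ∈ (0, √2)` and mesh points `x_j = z₁ + εj`, `j = 0, …, N`, with `z₂ = z₁ + εN`.
If a continuous function `B` satisfies `B(x_j) ≥ −x_j² + 1` at every mesh point and the
bridged part of `B` on each mesh interval (obtained by subtracting the linear interpolation
of the mesh values) stays above `−1/2`, then `B(x) > −x²` on all of `[z₁, z₂]`.
The key inequality is that `ε²·y(1−y) < 1/2` for all `y ∈ [0,1]` whenever `ε < √2`. -/
theorem mesh_parabola_inclusion (ε z₁ : ℝ) (hε0 : 0 < ε) (hε : ε < Real.sqrt 2)
    (N : ℕ) (B : ℝ → ℝ) (hcont : Continuous B)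
    (hmesh : ∀ j ≤ N, -(z₁ + ε * j) ^ 2 + 1 ≤ B (z₁ + ε * j))
    (hbridge : ∀ j < N, ∀ x ∈ Set.Icc (z₁ + ε * j) (z₁ + ε * (j + 1)),
        -(1 / 2) ≤ B x - (((z₁ + ε * (j + 1)) - x) / ε * B (z₁ + ε * j) +
          (x - (z₁ + ε * j)) / ε * B (z₁ + ε * (j + 1)))) :
    (∀ x ∈ Set.Icc z₁ (z₁ + ε * N), -x ^ 2 < B x) ∧
    (∀ y ∈ Set.Icc (0 : ℝ) 1, ε ^ 2 * (y * (1 - y)) < 1 / 2) := by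
  have hε2 : ε ^ 2 < 2 := by
    have := (Real.lt_sqrt hε0.le).mp hε
    linarith
  have hkey : ∀ y ∈ Set.Icc (0 : ℝ) 1, ε ^ 2 * (y * (1 - y)) < 1 / 2 := by
    intro y hy
    obtain ⟨hy0, hy1⟩ := hy
    nlinarith [sq_nonneg (y - 1/2), sq_nonneg ε,
      mul_nonneg (mul_nonneg hy0 (by linarith : (0:ℝ) ≤ 1 - y)) (sq_nonneg ε)]
  refine ⟨?_, hkey⟩
  intro x hx
  obtain ⟨hx1, hx2⟩ := hx
  rcases Nat.eq_zero_or_pos N with hN | hN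
  · subst hN
    simp only [Nat.cast_zero, mul_zero, add_zero] at hx2
    have hx : x = z₁ := le_antisymm hx2 hx1
    subst hx
    have := hmesh 0 (le_refl 0)
    simp only [Nat.cast_zero, mul_zero, add_zero] at this
    linarith
  · have ht0 : 0 ≤ (x - z₁) / ε := div_nonneg (by linarith) hε0.le
    have htN : (x - z₁) / ε ≤ N := by
      rw [div_le_iff₀ hε0]
      linarith [hx2]
    obtain ⟨j, hjN, hjt, htj1⟩ : ∃ j : ℕ, j < N ∧ (j : ℝ) ≤ (x - z₁) / ε ∧
        (x - z₁) / ε ≤ (j : ℝ) + 1 := by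
      refine ⟨min ⌊(x - z₁) / ε⌋₊ (N - 1), lt_of_le_of_lt (min_le_right _ _)
        (Nat.sub_lt hN one_pos), ?_, ?_⟩
      · exact le_trans (by exact_mod_cast Nat.cast_le.mpr (min_le_left _ _))
          (Nat.floor_le ht0)
      · rcases le_or_gt ⌊(x - z₁) / ε⌋₊ (N - 1) with h | h
        · rw [min_eq_left h]
          exact le_of_lt (Nat.lt_floor_add_one _)
        · rw [min_eq_right (le_of_lt h)]
          have hcast : ((N - 1 : ℕ) : ℝ) = (N : ℝ) - 1 := by
            have := Nat.cast_sub (by omega : 1 ≤ N) (R := ℝ)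
            simpa using this
          rw [hcast]
          linarith
    have hax : z₁ + ε * j ≤ x := by
      have := (le_div_iff₀ hε0).mp hjt; linarith
    have hxb : x ≤ z₁ + ε * (j + 1 : ℝ) := by
      have := (div_le_iff₀ hε0).mp htj1; linarith
    have hB := hbridge j hjN x ⟨hax, hxb⟩
    have hBa := hmesh j (le_of_lt hjN)
    have hBb := hmesh (j + 1) hjN
    have hcastb : (((j : ℕ) + 1 : ℕ) : ℝ) = (j : ℝ) + 1 := by push_cast; ring
    rw [hcastb] at hBb
    have heq1 : z₁ + ε * ((j : ℝ) + 1) = (z₁ + ε * j) + ε := by ring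
    rw [heq1] at hB hBb hxb
    exact interval_step_aux ε (z₁ + ε * j) x (B (z₁ + ε * j)) (B (z₁ + ε * j + ε))
      (B x) hε0 hBa (by linarith [hBb]) (by linarith [hB]) hax hxb
      (hkey ((x - (z₁ + ε * j)) / ε) ⟨div_nonneg (by linarith) hε0.le,
        by rw [div_le_one hε0]; linarith⟩)
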